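/- (Theorem 2, fidelity form, abstract version) Let P⁽⁰⁾, P⁽¹⁾, P⁽⁰⁰⁾, P⁽⁰¹⁾, P⁽¹⁰⁾, P⁽¹¹⁾ be orthogonal projections on a finite-dimensional complex Hilbert space and ψ a unit vector, such that P⁽⁰⁾P⁽¹⁾ = P⁽¹⁾P⁽⁰⁾ = |ψ⟩⟨ψ|, and for each a ∈ {0,1}: P⁽ᵃ⁰⁾P⁽ᵃ¹⁾ = P⁽ᵃ¹⁾P⁽ᵃ⁰⁾ = P⁽ᵃ⁾. Then for every density operator ρ (positive semidefinite with trace 1), tr(ρ |ψ⟩⟨ψ|) ≥ tr(ρ P⁽⁰⁰⁾) + tr(ρ P⁽⁰¹⁾) + tr(ρ P⁽¹⁰⁾) + tr(ρ P⁽¹¹⁾) − 3. -/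

import Mathlib

open Matrix
open scoped BigOperators ComplexOrder

noncomputable section

/-- Outer product `|v⟩⟨w|`. -/
def outer {n : Type*} (v w : n → ℂ) : Matrix n n ℂ := Matrix.vecMulVec v (star w)

lemma trace_nonneg' {n : Type*} [Fintype n] [DecidableEq n] {X : Matrix n n ℂ}
    (hX : X.PosSemidef) : 0 ≤ X.trace := by
  rw [Matrix.trace]
  apply Finset.sum_nonneg
  intro i _
  exact hX.diag_nonneg

lemma trace_mul_psd_nonneg {n : Type*} [Fintype n] [DecidableEq n]
    {ρ M : Matrix n n ℂ} (hρ : ρ.PosSemidef) (hM : M.PosSemidef) :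
    0 ≤ (ρ * M).trace := by
  obtain ⟨B, hB⟩ : ∃ B : Matrix n n ℂ, ρ = Bᴴ * B := by
    open scoped MatrixOrder Matrix.Norms.L2Operator in
    exact CStarAlgebra.nonneg_iff_eq_star_mul_self.mp hρ.nonneg
  rw [hB, Matrix.mul_assoc, Matrix.trace_mul_comm]
  exact trace_nonneg' (hM.mul_mul_conjTranspose_same B)

/-- Union bound: if P, Q are commuting projections with product R, then
tr(ρR) ≥ tr(ρP) + tr(ρQ) − 1. -/
lemma union_bound {n : Type*} [Fintype n] [DecidableEq n]
    {P Q R ρ : Matrix n n ℂ}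
    (hP : Pᴴ = P) (hPi : P * P = P) (hQ : Qᴴ = Q) (hQi : Q * Q = Q)
    (hPQ : P * Q = R) (hQP : Q * P = R)
    (hρ : ρ.PosSemidef) (hρtr : ρ.trace = 1) :
    (ρ * R).trace.re ≥ (ρ * P).trace.re + (ρ * Q).trace.re - 1 := by
  have hPR : P * R = R := by rw [← hPQ, ← Matrix.mul_assoc, hPi]
  have hRP : R * P = R := by rw [← hQP, Matrix.mul_assoc, hPi]
  have hQR : Q * R = R := by rw [← hQP, ← Matrix.mul_assoc, hQi]
  have hRQ : R * Q = R := by rw [← hPQ, Matrix.mul_assoc, hQi]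
  have hR : Rᴴ = R := by
    nth_rewrite 1 [← hPQ]
    rw [Matrix.conjTranspose_mul, hP, hQ, hQP]
  set T : Matrix n n ℂ := 1 - (P + Q - R) with hT
  have hTH : Tᴴ = T := by
    simp [hT, Matrix.conjTranspose_sub, Matrix.conjTranspose_add, hP, hQ, hR]
  have hTT : T * T = T := by
    have hSS : (P + Q - R) * (P + Q - R) = P + Q - R := by
      simp only [Matrix.mul_sub, Matrix.sub_mul, Matrix.mul_add, Matrix.add_mul,
        hPi, hQi, hPQ, hQP, hPR, hRP, hQR, hRQ]
      have hRR : R * R = R := by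
        nth_rewrite 1 [← hPQ]
        rw [Matrix.mul_assoc, hQR, hPR]
      rw [hRR]
      abel
    have e : T * T = 1 - (P + Q - R) - (P + Q - R) + (P + Q - R) * (P + Q - R) := by
      rw [hT]; noncomm_ring
    rw [e, hSS, hT]; abel
  have hTpsd : T.PosSemidef := by
    have : Tᴴ * T = T := by rw [hTH, hTT]
    rw [← this]
    exact Matrix.posSemidef_conjTranspose_mul_self T
  have h := trace_mul_psd_nonneg hρ hTpsd
  have hexp : (ρ * T).trace = 1 - (ρ * P).trace - (ρ * Q).trace + (ρ * R).trace := by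
    simp only [hT, Matrix.mul_sub, Matrix.mul_add, Matrix.mul_one, Matrix.trace_sub,
      Matrix.trace_add, hρtr]
    ring
  rw [hexp] at h
  have := (Complex.le_def.mp h).1
  simp only [Complex.add_re, Complex.sub_re, Complex.one_re, Complex.zero_re] at this
  linarith

theorem stmt12 {n : Type*} [Fintype n] [DecidableEq n]
    (P0 P1 P00 P01 P10 P11 : Matrix n n ℂ) (ψ : n → ℂ)
    (hψ : star ψ ⬝ᵥ ψ = 1)
    (hP0 : P0ᴴ = P0) (hP0i : P0 * P0 = P0)
    (hP1 : P1ᴴ = P1) (hP1i : P1 * P1 = P1)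
    (hP00 : P00ᴴ = P00) (hP00i : P00 * P00 = P00)
    (hP01 : P01ᴴ = P01) (hP01i : P01 * P01 = P01)
    (hP10 : P10ᴴ = P10) (hP10i : P10 * P10 = P10)
    (hP11 : P11ᴴ = P11) (hP11i : P11 * P11 = P11)
    (h01 : P0 * P1 = outer ψ ψ) (h10 : P1 * P0 = outer ψ ψ)
    (h0a : P00 * P01 = P0) (h0b : P01 * P00 = P0)
    (h1a : P10 * P11 = P1) (h1b : P11 * P10 = P1)
    (ρ : Matrix n n ℂ) (hρ : ρ.PosSemidef) (hρtr : ρ.trace = 1) :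
    (ρ * outer ψ ψ).trace.re ≥
      (ρ * P00).trace.re + (ρ * P01).trace.re + (ρ * P10).trace.re +
        (ρ * P11).trace.re - 3 := by
  have h0 := union_bound hP00 hP00i hP01 hP01i h0a h0b hρ hρtr
  have h1 := union_bound hP10 hP10i hP11 hP11i h1a h1b hρ hρtr
  have h := union_bound hP0 hP0i hP1 hP1i h01 h10 hρ hρtr
  linarith
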